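/- Every column-symmetric element of the quotient algebra A[M^{m×n}]/I can be expressed as a polynomial with coefficients in A in the m row-sums s_1, …, s_m. -/

import Mathlib

open MvPolynomial Equiv Function Nat

section StmtAux

variable {A : Type*} [CommRing A] {m n : ℕ}

/-- The ideal generated by products of two variables in the same column. -/
noncomputable abbrev stmtColIdeal (A : Type*) [CommRing A] (m n : ℕ) :
    Ideal (MvPolynomial (Fin m × Fin n) A) :=
  Ideal.span {w : MvPolynomial (Fin m × Fin n) A |
    ∃ (i i' : Fin m) (j : Fin n), w = X (i, j) * X (i', j)}

lemma stmt_prod_mem {α : Type*} [DecidableEq α] (K : Finset α) (c : α → Fin m × Fin n)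
    {t t' : α} (ht : t ∈ K) (ht' : t' ∈ K) (hne : t ≠ t') (hcol : (c t).2 = (c t').2) :
    (∏ u ∈ K, (X (c u) : MvPolynomial (Fin m × Fin n) A)) ∈ stmtColIdeal A m n := by
  have ht'' : t' ∈ K.erase t := Finset.mem_erase.2 ⟨hne.symm, ht'⟩
  rw [← Finset.mul_prod_erase K _ ht, ← Finset.mul_prod_erase _ _ ht'', ← mul_assoc]
  refine Ideal.mul_mem_right _ _ (Ideal.subset_span ⟨(c t).1, (c t').1, (c t).2, ?_⟩)
  have h1 : ((c t).1, (c t).2) = c t := rfl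
  have h2 : ((c t').1, (c t).2) = c t' := by rw [hcol]
  rw [h1, h2]

lemma stmt_monomial_mem_of_bad (d : (Fin m × Fin n) →₀ ℕ) (j : Fin n)
    (h : 2 ≤ ∑ i, d (i, j)) :
    (monomial d (1 : A)) ∈ stmtColIdeal A m n := by
  classical
  -- find the two (possibly equal) rows
  have hpair : ∃ i i' : Fin m,
      Finsupp.single (i, j) 1 + Finsupp.single (i', j) 1 ≤ d := by
    by_cases h2 : ∃ i, 2 ≤ d (i, j)
    · obtain ⟨i, hi⟩ := h2
      refine ⟨i, i, fun x => ?_⟩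
      rcases eq_or_ne x (i, j) with rfl | hx
      · simpa using hi
      · simp [Finsupp.single_apply, Ne.symm hx]
    · push_neg at h2
      have h1 : ∃ i, 1 ≤ d (i, j) := by
        by_contra hc
        push_neg at hc
        simp only [Nat.lt_one_iff] at hc
        simp [Finset.sum_eq_zero fun i _ => hc i] at h
      obtain ⟨i, hi⟩ := h1
      have h3 : 1 ≤ ∑ i' ∈ Finset.univ.erase i, d (i', j) := by
        have hsplit := Finset.add_sum_erase Finset.univ (fun i' => d (i', j)) (Finset.mem_univ i)
        beta_reduce at hsplit
        have hdi : d (i, j) < 2 := h2 i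
        omega
      have h4 : ∃ i' ∈ Finset.univ.erase i, 1 ≤ d (i', j) := by
        by_contra hc
        push_neg at hc
        simp only [Nat.lt_one_iff] at hc
        rw [Finset.sum_congr rfl fun x hx => hc x hx] at h3
        simp at h3
      obtain ⟨i', hi'mem, hi'⟩ := h4
      have hii' : i ≠ i' := fun hh => (Finset.mem_erase.1 hi'mem).1 hh.symm
      refine ⟨i, i', fun x => ?_⟩
      rcases eq_or_ne x (i, j) with rfl | hx
      · have : ((i', j) : Fin m × Fin n) ≠ (i, j) := by simp [hii'.symm]
        simp [Finsupp.single_apply, this, hi]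
      · rcases eq_or_ne x (i', j) with rfl | hx'
        · have : ((i, j) : Fin m × Fin n) ≠ (i', j) := by simp [hii']
          simp [Finsupp.single_apply, this, hi']
        · simp [Finsupp.single_apply, Ne.symm hx, Ne.symm hx']
  obtain ⟨i, i', hle⟩ := hpair
  set e : (Fin m × Fin n) →₀ ℕ := Finsupp.single (i, j) 1 + Finsupp.single (i', j) 1 with he
  have hde : d - e + e = d := tsub_add_cancel_of_le hle
  have hX : (X (i, j) * X (i', j) : MvPolynomial (Fin m × Fin n) A) = monomial e 1 := by
    rw [he, X, X, monomial_mul, mul_one]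
  have : (monomial d (1 : A)) = monomial (d - e) 1 * (X (i, j) * X (i', j)) := by
    rw [hX, monomial_mul, mul_one, hde]
  rw [this]
  exact Ideal.mul_mem_left _ _ (Ideal.subset_span ⟨i, i', j, rfl⟩)

lemma stmt_exists_perm_extend {β : Type*} [Fintype β] {N : ℕ}
    (c g : β → Fin N) (hc : Injective c) (hg : Injective g) :
    ∃ σ : Perm (Fin N), ⇑σ ∘ c = g := by
  classical
  let e1 : β ≃ Set.range c := Equiv.ofInjective c hc
  let e2 : β ≃ Set.range g := Equiv.ofInjective g hg
  have hcard : Fintype.card (↥(Set.range c)ᶜ : Sort _)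
      = Fintype.card (↥(Set.range g)ᶜ : Sort _) := by
    rw [Fintype.card_compl_set, Fintype.card_compl_set,
      Set.card_range_of_injective hc, Set.card_range_of_injective hg]
  let e3 : (↥(Set.range c)ᶜ : Sort _) ≃ (↥(Set.range g)ᶜ : Sort _) :=
    Fintype.equivOfCardEq hcard
  refine ⟨(Equiv.Set.sumCompl (Set.range c)).symm.trans
      ((Equiv.sumCongr (e1.symm.trans e2) e3).trans
        (Equiv.Set.sumCompl (Set.range g))), funext fun t => ?_⟩
  have h1 : (Equiv.Set.sumCompl (Set.range c)).symm (c t) = Sum.inl ⟨c t, ⟨t, rfl⟩⟩ :=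
    Equiv.Set.sumCompl_symm_apply_of_mem (Set.mem_range_self t)
  simp only [Function.comp_apply, Equiv.trans_apply, h1, Equiv.sumCongr_apply, Sum.map_inl,
    Equiv.Set.sumCompl_apply_inl]
  have h3 : e1.symm ⟨c t, ⟨t, rfl⟩⟩ = t := Equiv.ofInjective_symm_apply hc t
  simp only [e1, e2] at h3 ⊢
  rw [h3]
  rfl

lemma stmt_fiber_card {β : Type*} [Fintype β] {N : ℕ}
    (c g : β → Fin N) (hc : Injective c) (hg : Injective g) :
    (Finset.univ.filter fun σ : Perm (Fin N) => ⇑σ ∘ c = g).card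
      = (N - Fintype.card β)! := by
  classical
  obtain ⟨σ₀, hσ₀⟩ := stmt_exists_perm_extend c g hc hg
  have hcard : (Finset.univ.filter fun σ : Perm (Fin N) => ⇑σ ∘ c = g).card
      = (Finset.univ.filter fun τ : Perm (Fin N) => ⇑τ ∘ c = c).card := by
    refine Finset.card_bij' (fun σ _ => σ₀⁻¹ * σ) (fun τ _ => σ₀ * τ) ?_ ?_ ?_ ?_
    · intro σ hσ
      rw [Finset.mem_filter] at hσ ⊢
      refine ⟨Finset.mem_univ _, funext fun t => ?_⟩
      show σ₀⁻¹ (σ (c t)) = c t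
      have ha := congrFun hσ.2 t
      have hb := congrFun hσ₀ t
      simp only [Function.comp_apply] at ha hb
      rw [ha, ← hb]
      exact Equiv.symm_apply_apply _ _
    · intro τ hτ
      rw [Finset.mem_filter] at hτ ⊢
      refine ⟨Finset.mem_univ _, funext fun t => ?_⟩
      show σ₀ (τ (c t)) = g t
      have ha := congrFun hτ.2 t
      have hb := congrFun hσ₀ t
      simp only [Function.comp_apply] at ha hb
      rw [ha, hb]
    · intro σ _
      simp [mul_assoc]
    · intro τ _
      simp [← mul_assoc]
  rw [hcard]
  have h1 : (Finset.univ.filter fun τ : Perm (Fin N) => ⇑τ ∘ c = c).card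
      = Fintype.card {τ : Perm (Fin N) // ⇑τ ∘ c = c} := (Fintype.card_subtype _).symm
  have e : Perm {x : Fin N // x ∉ Set.range c} ≃ {τ : Perm (Fin N) // ⇑τ ∘ c = c} :=
    (Equiv.Perm.subtypeEquivSubtypePerm (fun x => x ∉ Set.range c)).trans
      (Equiv.subtypeEquivRight (fun f => by
        constructor
        · intro hf
          exact funext fun t => hf (c t) (not_not_intro ⟨t, rfl⟩)
        · rintro hf a ha
          obtain ⟨t, rfl⟩ := not_not.mp ha
          exact congrFun hf t))
  have hcount : Fintype.card {x : Fin N // x ∉ Set.range c} = N - Fintype.card β := by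
    have e' : {x : Fin N // x ∉ Set.range c} ≃ (↥(Set.range c)ᶜ : Sort _) :=
      Equiv.subtypeEquivRight fun x => (Set.mem_compl_iff _ _).symm
    rw [Fintype.card_congr e', Fintype.card_compl_set,
      Set.card_range_of_injective hc, Fintype.card_fin]
  rw [h1, ← Fintype.card_congr e, Fintype.card_perm, hcount]

lemma stmt_sum_perm {β : Type*} [Fintype β] [DecidableEq β]
    (r : β → Fin m) (c : β → Fin n) (hc : Injective c)
    [DecidablePred fun g : β → Fin n => Injective g] :
    ∑ σ : Perm (Fin n), ∏ t, (X (r t, σ (c t)) : MvPolynomial (Fin m × Fin n) A)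
      = ∑ g ∈ Finset.univ.filter (fun g : β → Fin n => Injective g),
          (n - Fintype.card β)! • ∏ t, (X (r t, g t) : MvPolynomial (Fin m × Fin n) A) := by
  classical
  have h := Finset.sum_comp (s := (Finset.univ : Finset (Perm (Fin n))))
      (fun g : β → Fin n => ∏ t, (X (r t, g t) : MvPolynomial (Fin m × Fin n) A))
      (fun σ => ⇑σ ∘ c)
  simp only [Function.comp_apply] at h
  have himage : Finset.univ.image (fun σ : Perm (Fin n) => ⇑σ ∘ c)
      = Finset.univ.filter (fun g : β → Fin n => Injective g) := by
    ext g
    simp only [Finset.mem_image, Finset.mem_filter, Finset.mem_univ, true_and]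
    constructor
    · rintro ⟨σ, rfl⟩
      exact σ.injective.comp hc
    · intro hg
      obtain ⟨σ, hσ⟩ := stmt_exists_perm_extend c g hc hg
      exact ⟨σ, hσ⟩
  rw [himage] at h
  rw [h]
  refine Finset.sum_congr rfl fun g hg => ?_
  rw [Finset.mem_filter] at hg
  rw [stmt_fiber_card c g hc hg.2]

lemma stmt_prod_rowsum {β : Type*} [Fintype β] [DecidableEq β] (r : β → Fin m)
    [DecidablePred fun g : β → Fin n => Injective g] :
    Ideal.Quotient.mk (stmtColIdeal A m n) (∏ t, ∑ j, X (r t, j))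
      = ∑ g ∈ Finset.univ.filter (fun g : β → Fin n => Injective g),
          Ideal.Quotient.mk (stmtColIdeal A m n) (∏ t, X (r t, g t)) := by
  classical
  rw [Finset.prod_univ_sum, Fintype.piFinset_univ, map_sum,
    ← Finset.sum_filter_add_sum_filter_not Finset.univ
      (fun g : β → Fin n => Injective g)
      (fun g => Ideal.Quotient.mk (stmtColIdeal A m n) (∏ t, X (r t, g t)))]
  have h0 : ∑ g ∈ Finset.univ.filter (fun g : β → Fin n => ¬ Injective g),
      Ideal.Quotient.mk (stmtColIdeal A m n) (∏ t, X (r t, g t)) = 0 := by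
    refine Finset.sum_eq_zero fun g hg => ?_
    rw [Finset.mem_filter] at hg
    obtain ⟨t, t', hgtt, hne⟩ := Function.not_injective_iff.mp hg.2
    rw [Ideal.Quotient.eq_zero_iff_mem]
    exact stmt_prod_mem Finset.univ (fun u => (r u, g u))
      (Finset.mem_univ t) (Finset.mem_univ t') hne (by simpa using hgtt)
  rw [h0, add_zero]

noncomputable def stmtPhi (A : Type*) [CommRing A] (m n : ℕ) :
    MvPolynomial (Fin m) A →ₐ[A] (MvPolynomial (Fin m × Fin n) A ⧸ stmtColIdeal A m n) :=
  (Ideal.Quotient.mkₐ A (stmtColIdeal A m n)).comp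
    (aeval fun i : Fin m => ∑ j : Fin n, X (i, j))

lemma stmt_monomial_key (d : (Fin m × Fin n) →₀ ℕ) :
    (∑ σ : Perm (Fin n),
        Ideal.Quotient.mk (stmtColIdeal A m n) (rename (Prod.map id ⇑σ) (monomial d 1)))
      ∈ (stmtPhi A m n).range := by
  classical
  by_cases hbad : ∃ j, 2 ≤ ∑ i, d (i, j)
  · obtain ⟨j, hj⟩ := hbad
    have hz : ∀ σ : Perm (Fin n),
        Ideal.Quotient.mk (stmtColIdeal A m n)
          (rename (Prod.map id ⇑σ) (monomial d (1 : A))) = 0 := by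
      intro σ
      rw [rename_monomial, Ideal.Quotient.eq_zero_iff_mem]
      apply stmt_monomial_mem_of_bad _ (σ j)
      have hinj : Injective (Prod.map id ⇑σ : Fin m × Fin n → Fin m × Fin n) :=
        fun x y hxy => by
          obtain ⟨x1, x2⟩ := x
          obtain ⟨y1, y2⟩ := y
          simpa [Prod.ext_iff, σ.injective.eq_iff] using hxy
      have hmap : ∀ i : Fin m,
          (Finsupp.mapDomain (Prod.map id ⇑σ) d) (i, σ j) = d (i, j) := fun i =>
        Finsupp.mapDomain_apply hinj d (i, j)
      have hsum : ∑ i, (Finsupp.mapDomain (Prod.map id ⇑σ) d) (i, σ j) = ∑ i, d (i, j) :=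
        Finset.sum_congr rfl fun i _ => hmap i
      omega
    rw [Finset.sum_congr rfl fun σ _ => hz σ]
    simp only [Finset.sum_const, smul_zero]
    exact zero_mem _
  · push_neg at hbad
    have hone : ∀ u ∈ d.support, d u = 1 := by
      intro u hu
      have h1 : 1 ≤ d u := Nat.one_le_iff_ne_zero.mpr (Finsupp.mem_support_iff.mp hu)
      have h2 : d u ≤ ∑ i, d (i, u.2) := by
        have := Finset.single_le_sum (f := fun i => d (i, u.2))
          (fun i _ => Nat.zero_le _) (Finset.mem_univ u.1)
        simpa using this
      have h3 := hbad u.2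
      omega
    set β := {u : Fin m × Fin n // u ∈ d.support} with hβ
    set r : β → Fin m := fun t => (t : Fin m × Fin n).1 with hr
    set c : β → Fin n := fun t => (t : Fin m × Fin n).2 with hcdef
    have hc : Injective c := by
      intro t t' h
      by_contra hne
      have h1ne : (t : Fin m × Fin n).1 ≠ (t' : Fin m × Fin n).1 := by
        intro h1
        exact hne (Subtype.ext (Prod.ext h1 h))
      have hdt : d ((t : Fin m × Fin n).1, (t : Fin m × Fin n).2) = 1 := by
        rw [Prod.mk.eta]; exact hone _ t.2
      have hdt' : d ((t' : Fin m × Fin n).1, (t : Fin m × Fin n).2) = 1 := by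
        rw [show ((t : Fin m × Fin n).2) = ((t' : Fin m × Fin n).2) from h, Prod.mk.eta]
        exact hone _ t'.2
      have hsum : d ((t : Fin m × Fin n).1, (t : Fin m × Fin n).2)
          + d ((t' : Fin m × Fin n).1, (t : Fin m × Fin n).2)
          ≤ ∑ i, d (i, (t : Fin m × Fin n).2) := by
        have hs := Finset.sum_le_sum_of_subset
          (Finset.subset_univ {(t : Fin m × Fin n).1, (t' : Fin m × Fin n).1})
          (f := fun i => d (i, (t : Fin m × Fin n).2))
        rw [Finset.sum_pair h1ne] at hs
        exact hs
      have h3 := hbad (t : Fin m × Fin n).2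
      omega
    have hmon : (monomial d (1 : A)) = ∏ t : β, X ((t : Fin m × Fin n)) := by
      rw [monomial_eq, C_1, one_mul, Finsupp.prod]
      rw [Finset.prod_congr rfl fun u hu => by rw [hone u hu, pow_one]]
      rw [Finset.univ_eq_attach, Finset.prod_attach d.support fun u => (X u : MvPolynomial _ A)]
    have hren : ∀ σ : Perm ( Fin n), rename (Prod.map id ⇑σ) (monomial d (1 : A))
        = ∏ t : β, X (r t, σ (c t)) := by
      intro σ
      rw [hmon, map_prod]
      refine Finset.prod_congr rfl fun t _ => ?_
      rw [rename_X]
      rfl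
    rw [Finset.sum_congr rfl fun σ _ => by rw [hren σ]]
    rw [← map_sum, stmt_sum_perm r c hc, map_sum]
    have : ∀ g ∈ Finset.univ.filter (fun g : β → Fin n => Injective g),
        Ideal.Quotient.mk (stmtColIdeal A m n)
            ((n - Fintype.card β)! • ∏ t, (X (r t, g t) : MvPolynomial (Fin m × Fin n) A))
          = (n - Fintype.card β)! •
            Ideal.Quotient.mk (stmtColIdeal A m n) (∏ t, X (r t, g t)) := fun g _ => by
      rw [map_nsmul]
    rw [Finset.sum_congr rfl this, ← Finset.smul_sum, ← stmt_prod_rowsum r]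
    refine ⟨(n - Fintype.card β)! • ∏ t : β, X (r t), ?_⟩
    rw [map_nsmul]
    congr 1
    show Ideal.Quotient.mkₐ A (stmtColIdeal A m n) (aeval _ (∏ t : β, X (r t))) = _
    rw [map_prod, Finset.prod_congr rfl fun t _ => by rw [aeval_X]]
    rfl

lemma stmt_sum_mem (p : MvPolynomial (Fin m × Fin n) A) :
    (∑ σ : Perm (Fin n),
        Ideal.Quotient.mk (stmtColIdeal A m n) (rename (Prod.map id ⇑σ) p))
      ∈ (stmtPhi A m n).range := by
  classical
  have e0 : ∀ σ : Perm (Fin n),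
      Ideal.Quotient.mk (stmtColIdeal A m n) (rename (Prod.map id ⇑σ) p)
        = ∑ d ∈ p.support, Ideal.Quotient.mk (stmtColIdeal A m n)
            (rename (Prod.map id ⇑σ) (monomial d (coeff d p))) := fun σ => by
    conv_lhs => rw [← support_sum_monomial_coeff p]
    rw [map_sum, map_sum]
  rw [Finset.sum_congr rfl fun σ _ => e0 σ, Finset.sum_comm]
  refine Subalgebra.sum_mem _ fun d _ => ?_
  have hmono : (monomial d (coeff d p) : MvPolynomial (Fin m × Fin n) A)
      = C (coeff d p) * monomial d 1 := by rw [C_mul_monomial, mul_one]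
  have e1 : ∀ σ : Perm (Fin n),
      Ideal.Quotient.mk (stmtColIdeal A m n)
          (rename (Prod.map id ⇑σ) (monomial d (coeff d p)))
        = Ideal.Quotient.mk (stmtColIdeal A m n) (C (coeff d p))
          * Ideal.Quotient.mk (stmtColIdeal A m n)
              (rename (Prod.map id ⇑σ) (monomial d 1)) := fun σ => by
    rw [hmono, map_mul, map_mul, rename_C]
  rw [Finset.sum_congr rfl fun σ _ => e1 σ, ← Finset.mul_sum]
  have hCeq : stmtPhi A m n (C (coeff d p))
      = Ideal.Quotient.mk (stmtColIdeal A m n) (C (coeff d p)) := by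
    show Ideal.Quotient.mkₐ A (stmtColIdeal A m n)
        (aeval (fun i : Fin m => ∑ j : Fin n, X (i, j)) (C (coeff d p))) = _
    rw [aeval_C, Ideal.Quotient.mkₐ_eq_mk, ← MvPolynomial.algebraMap_eq]
  have hCmem : Ideal.Quotient.mk (stmtColIdeal A m n) (C (coeff d p))
      ∈ (stmtPhi A m n).range := ⟨C (coeff d p), hCeq⟩
  exact mul_mem hCmem (stmt_monomial_key d)

end StmtAux

theorem stmt_10 {A : Type*} [CommRing A] [Algebra ℚ A] (m n : ℕ)
    (p : MvPolynomial (Fin m × Fin n) A)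
    (hp : ∀ σ : Equiv.Perm (Fin n),
      Ideal.Quotient.mk
          (Ideal.span {w : MvPolynomial (Fin m × Fin n) A |
            ∃ (i i' : Fin m) (j : Fin n), w = X (i, j) * X (i', j)})
          (rename (Prod.map id σ) p) =
        Ideal.Quotient.mk _ p) :
    ∃ G : MvPolynomial (Fin m) A,
      Ideal.Quotient.mk
          (Ideal.span {w : MvPolynomial (Fin m × Fin n) A |
            ∃ (i i' : Fin m) (j : Fin n), w = X (i, j) * X (i', j)})
          (aeval (fun i : Fin m => ∑ j, X (i, j)) G) =
        Ideal.Quotient.mk _ p := by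
  classical
  have hT := stmt_sum_mem (m := m) (n := n) p
  have hT2 : (∑ σ : Perm (Fin n),
      Ideal.Quotient.mk (stmtColIdeal A m n) (rename (Prod.map id ⇑σ) p))
      = (n !) • Ideal.Quotient.mk (stmtColIdeal A m n) p := by
    rw [Finset.sum_congr rfl fun σ _ => hp σ, Finset.sum_const, Finset.card_univ,
      Fintype.card_perm, Fintype.card_fin]
  obtain ⟨G, hG0⟩ := hT
  have hG : stmtPhi A m n G = ∑ σ : Perm (Fin n),
      Ideal.Quotient.mk (stmtColIdeal A m n) (rename (Prod.map id ⇑σ) p) := hG0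
  have hu : algebraMap ℚ A ((n ! : ℚ)⁻¹) * ((n ! : ℕ) : A) = 1 := by
    have h1 : ((n ! : ℕ) : A) = algebraMap ℚ A ((n ! : ℕ) : ℚ) := by
      rw [map_natCast]
    rw [h1, ← map_mul, inv_mul_cancel₀ (by exact_mod_cast Nat.factorial_ne_zero n), map_one]
  refine ⟨algebraMap ℚ A ((n ! : ℚ)⁻¹) • G, ?_⟩
  have hG' : stmtPhi A m n (algebraMap ℚ A ((n ! : ℚ)⁻¹) • G)
      = algebraMap ℚ A ((n ! : ℚ)⁻¹) • ((n !) • Ideal.Quotient.mk (stmtColIdeal A m n) p) := by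
    rw [map_smul, hG, hT2]
  have hfin : algebraMap ℚ A ((n ! : ℚ)⁻¹) • ((n !) • Ideal.Quotient.mk (stmtColIdeal A m n) p)
      = Ideal.Quotient.mk (stmtColIdeal A m n) p := by
    rw [← Nat.cast_smul_eq_nsmul A, smul_smul, hu, one_smul]
  exact hG'.trans hfin
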